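/- Let v ≥ 1 and H, r, l be natural numbers, let i₁, i₂ : Fin v, and let w : Fin v → ℝ be a fixed vector with coordinates in {-1, 1}. Then there exists a coefficient vector c indexed by tuples of length at most 2r, namely c : (Σ k : Fin (2*r+1), (Fin k → Fin v)) → ℝ, such that for every w* : Fin v → ℝ with coordinates in {-1, 1}, ((1 : ℝ) - (l + (v - ∑_{i} w i * w* i)/2 + 2 * (if w i₁ = w* i₁ then (1:ℝ) else 0) * (if w i₂ = w* i₂ then (1:ℝ) else 0)) / (H + v))^r = ∑_{(k, f)} c (k, f) * ∏_{j : Fin k} w* (f j). That is, the optimal value function of the intermediate states in the two-action MDP, (1 - (l + dist(w,w*) + 2·𝟙{w_{i₁} = w*_{i₁}}·𝟙{w_{i₂} = w*_{i₂}})/(H+v))^r, is a linear combination of monomials in the coordinates of w* of degree at most 2r. -/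

import Mathlib

open MvPolynomial

/-- Product of a function over the list enumeration of a finitely supported multiplicity
function equals the product with exponents. -/
lemma prod_get_toList_aux {v : ℕ} (m : Fin v →₀ ℕ) (x : Fin v → ℝ) :
    ∏ j : Fin m.toMultiset.toList.length, x (m.toMultiset.toList.get j) =
      ∏ i ∈ m.support, x i ^ m i := by
  have hmap := List.map_ofFn (f := m.toMultiset.toList.get) (g := x)
  rw [List.ofFn_get] at hmap
  have h1 : ∏ j : Fin m.toMultiset.toList.length, x (m.toMultiset.toList.get j)
      = (m.toMultiset.toList.map x).prod := by
    rw [hmap, List.prod_ofFn]; rfl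
  have h2 : ((m.toMultiset.toList.map x : List ℝ) : Multiset ℝ) = m.toMultiset.map x := by
    rw [← Multiset.map_coe, Multiset.coe_toList]
  have h3 : (m.toMultiset.toList.map x).prod = (m.toMultiset.map x).prod := by
    rw [← h2]; rfl
  rw [h1, h3, Finsupp.toMultiset_map, Finsupp.prod_toMultiset,
    Finsupp.prod_mapDomain_index (fun _ => pow_zero _) (fun _ _ _ => pow_add _ _ _)]
  rfl

/-- The optimal value function of the intermediate states of the two-action MDP,
`(1 - (l + dist(w, wstar) + 2·𝟙{w i₁ = wstar i₁}·𝟙{w i₂ = wstar i₂})/(H + v))^r`,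
viewed via `dist(w, wstar) = (v - ⟨w, wstar⟩)/2`, is a linear combination of monomials in
the coordinates of `wstar` of degree at most `2r`. -/
theorem intermediate_value_linear_in_features {v H r l : ℕ} (hv : 1 ≤ v)
    (i₁ i₂ : Fin v) (w : Fin v → ℝ) (hw : ∀ i, w i = -1 ∨ w i = 1) :
    ∃ c : (Σ k : Fin (2 * r + 1), (Fin k → Fin v)) → ℝ,
      ∀ wstar : Fin v → ℝ, (∀ i, wstar i = -1 ∨ wstar i = 1) →
        ((1 : ℝ) - ((l : ℝ) + ((v : ℝ) - ∑ i, w i * wstar i) / 2 +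
              2 * (if w i₁ = wstar i₁ then (1 : ℝ) else 0) *
                (if w i₂ = wstar i₂ then (1 : ℝ) else 0)) / ((H : ℝ) + (v : ℝ))) ^ r =
          ∑ p : (Σ k : Fin (2 * r + 1), (Fin k → Fin v)), c p * ∏ j, wstar (p.2 j) := by
  classical
  set q : MvPolynomial (Fin v) ℝ :=
    C 1 - C (((H : ℝ) + v)⁻¹) * (C (l : ℝ) + C (2⁻¹ : ℝ) * (C (v : ℝ) - ∑ i, C (w i) * X i)
      + C 2 * ((C (2⁻¹ : ℝ) + C (w i₁ * 2⁻¹) * X i₁) * (C (2⁻¹ : ℝ) + C (w i₂ * 2⁻¹) * X i₂)))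
    with hq
  -- degree bound
  have hlin : ∀ (a : ℝ) (i : Fin v), (C a * X i : MvPolynomial (Fin v) ℝ).totalDegree ≤ 1 := by
    intro a i
    refine (totalDegree_mul _ _).trans ?_
    simp [totalDegree_X]
  have haff : ∀ (a b : ℝ) (i : Fin v),
      (C a + C b * X i : MvPolynomial (Fin v) ℝ).totalDegree ≤ 1 := by
    intro a b i
    refine (totalDegree_add _ _).trans ?_
    simp [hlin]
  have hqdeg : q.totalDegree ≤ 2 := by
    rw [hq, sub_eq_add_neg]
    refine (totalDegree_add _ _).trans (max_le (by simp) ?_)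
    rw [totalDegree_neg]
    refine (totalDegree_mul _ _).trans ?_
    simp only [totalDegree_C, zero_add]
    refine (totalDegree_add _ _).trans (max_le ((totalDegree_add _ _).trans
      (max_le (by rw [totalDegree_C]; omega) ?_)) ?_)
    · refine (totalDegree_mul _ _).trans ?_
      simp only [totalDegree_C, zero_add]
      rw [sub_eq_add_neg]
      refine ((totalDegree_add _ _).trans
        (max_le (by rw [totalDegree_C]; omega) ?_)).trans one_le_two
      rw [totalDegree_neg]
      exact (totalDegree_finset_sum _ _).trans (Finset.sup_le fun i _ => hlin _ i)
    · refine (totalDegree_mul _ _).trans ?_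
      simp only [totalDegree_C, zero_add]
      refine (totalDegree_mul _ _).trans ?_
      have := haff (2⁻¹ : ℝ) (w i₁ * 2⁻¹) i₁
      have := haff (2⁻¹ : ℝ) (w i₂ * 2⁻¹) i₂
      omega
  set p : MvPolynomial (Fin v) ℝ := q ^ r with hp
  have hpdeg : p.totalDegree ≤ 2 * r := by
    refine (totalDegree_pow _ _).trans ?_
    calc r * q.totalDegree ≤ r * 2 := Nat.mul_le_mul_left r hqdeg
    _ = 2 * r := Nat.mul_comm r 2
  -- index construction
  set idx : (Fin v →₀ ℕ) → (Σ k : Fin (2 * r + 1), (Fin k → Fin v)) := fun m =>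
    if h : m.toMultiset.toList.length < 2 * r + 1 then
      ⟨⟨m.toMultiset.toList.length, h⟩, fun j => m.toMultiset.toList.get j⟩
    else ⟨⟨0, Nat.succ_pos _⟩, Fin.elim0⟩ with hidx
  refine ⟨fun t => ∑ m ∈ p.support, if idx m = t then p.coeff m else 0, ?_⟩
  intro wstar hws
  -- indicator identity
  have hind : ∀ j : Fin v, (if w j = wstar j then (1 : ℝ) else 0) = 2⁻¹ + w j * 2⁻¹ * wstar j := by
    intro j
    rcases hw j with h1 | h1 <;> rcases hws j with h2 | h2 <;>
      simp [h1, h2] <;> norm_num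
  -- LHS equals eval of p
  have hLHS : ((1 : ℝ) - ((l : ℝ) + ((v : ℝ) - ∑ i, w i * wstar i) / 2 +
        2 * (if w i₁ = wstar i₁ then (1 : ℝ) else 0) *
          (if w i₂ = wstar i₂ then (1 : ℝ) else 0)) / ((H : ℝ) + (v : ℝ))) ^ r
      = eval wstar p := by
    rw [hp, map_pow]
    congr 1
    rw [hq, hind i₁, hind i₂]
    simp only [map_sub, map_add, map_mul, eval_C, eval_X, map_sum]
    ring
  rw [hLHS, eval_eq]
  have hsplit : ∀ t : (Σ k : Fin (2 * r + 1), (Fin k → Fin v)),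
      (∑ m ∈ p.support, if idx m = t then p.coeff m else 0) * ∏ j, wstar (t.2 j)
      = ∑ m ∈ p.support, if idx m = t then p.coeff m * ∏ j, wstar (t.2 j) else 0 := by
    intro t
    rw [Finset.sum_mul]
    exact Finset.sum_congr rfl fun m _ => by split <;> simp
  simp only [hsplit]
  rw [Finset.sum_comm]
  refine Finset.sum_congr rfl fun m hm => ?_
  rw [Finset.sum_ite_eq, if_pos (Finset.mem_univ _)]
  have hlen : m.toMultiset.toList.length < 2 * r + 1 := by
    rw [Multiset.length_toList, Finsupp.card_toMultiset]
    have h2 : (m.sum fun _ e => e) ≤ 2 * r := (le_totalDegree hm).trans hpdeg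
    exact Nat.lt_succ_of_le h2
  have heq : idx m = ⟨⟨m.toMultiset.toList.length, hlen⟩,
      fun j => m.toMultiset.toList.get j⟩ := by
    rw [hidx]; exact dif_pos hlen
  rw [heq]
  exact congrArg _ (prod_get_toList_aux m wstar).symm
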